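/- Fix real numbers a, b, s > 0 with a > sb. The function ψ(y) := 2(a+b)·arctan(1/y) + 2b·arctan(y/(1+s)) is strictly decreasing on (0, +∞), with ψ(y) → (a+b)π as y → 0⁺ and ψ(y) → bπ as y → +∞. -/

import Mathlib

open Filter Real

theorem stmt_18 (a b s : ℝ) (ha : 0 < a) (hb : 0 < b) (hs : 0 < s) (hsb : s * b < a) :
    StrictAntiOn (fun y : ℝ => 2 * (a + b) * Real.arctan (1 / y) +
        2 * b * Real.arctan (y / (1 + s))) (Set.Ioi 0) ∧
    Tendsto (fun y : ℝ => 2 * (a + b) * Real.arctan (1 / y) + 2 * b * Real.arctan (y / (1 + s)))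
      (nhdsWithin 0 (Set.Ioi 0)) (nhds ((a + b) * Real.pi)) ∧
    Tendsto (fun y : ℝ => 2 * (a + b) * Real.arctan (1 / y) + 2 * b * Real.arctan (y / (1 + s)))
      atTop (nhds (b * Real.pi)) := by
  have hs1 : (0:ℝ) < 1 + s := by linarith
  set f : ℝ → ℝ := fun y => 2 * (a + b) * Real.arctan (1 / y) +
      2 * b * Real.arctan (y / (1 + s)) with hf
  have hderiv : ∀ y : ℝ, 0 < y → HasDerivAt f
      (2*(a+b) * ((1/(1+(1/y)^2)) * (-(y^2)⁻¹)) + 2*b * ((1/(1+(y/(1+s))^2)) * (1/(1+s)))) y := by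
    intro y hy
    have h1 : HasDerivAt (fun y : ℝ => Real.arctan (1/y)) ((1/(1+(1/y)^2)) * (-(y^2)⁻¹)) y := by
      have hinv : HasDerivAt (fun y : ℝ => 1/y) (-(y^2)⁻¹) y := by
        simpa [one_div] using hasDerivAt_inv hy.ne'
      exact (Real.hasDerivAt_arctan (1/y)).comp y hinv
    have h2 : HasDerivAt (fun y : ℝ => Real.arctan (y/(1+s))) ((1/(1+(y/(1+s))^2)) * (1/(1+s))) y := by
      have hd : HasDerivAt (fun y : ℝ => y/(1+s)) (1/(1+s)) y := by
        simpa using (hasDerivAt_id y).div_const (1+s)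
      exact (Real.hasDerivAt_arctan (y/(1+s))).comp y hd
    exact (h1.const_mul (2*(a+b))).add (h2.const_mul (2*b))
  constructor
  · apply strictAntiOn_of_deriv_neg (convex_Ioi 0)
    · intro y hy
      exact ((hderiv y hy).continuousAt).continuousWithinAt
    · intro y hy
      rw [interior_Ioi] at hy
      have hy' : (0:ℝ) < y := hy
      rw [(hderiv y hy').deriv]
      have hy2 : (0:ℝ) < y^2 := by positivity
      have t1 : (1/(1+(1/y)^2)) * (-(y^2)⁻¹) = -(1/(1+y^2)) := by
        field_simp
        ring
      have t2 : (1/(1+(y/(1+s))^2)) * (1/(1+s)) = (1+s)/((1+s)^2+y^2) := by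
        rw [div_pow]
        field_simp
      rw [t1, t2]
      have key : 2*b*((1+s)/((1+s)^2+y^2)) < 2*(a+b)*(1/(1+y^2)) := by
        rw [mul_div_assoc', mul_div_assoc', mul_one,
          div_lt_div_iff₀ (by positivity) (by positivity)]
        nlinarith [mul_pos hy2 (sub_pos.mpr hsb), mul_pos hs1 hs1, mul_pos hb hs1,
          mul_pos ha hs1, sq_nonneg y]
      nlinarith [key]
  · constructor
    · have t1 : Tendsto (fun y : ℝ => Real.arctan (1/y)) (nhdsWithin 0 (Set.Ioi 0)) (nhds (Real.pi/2)) := by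
        have := Real.tendsto_arctan_atTop.mono_right nhdsWithin_le_nhds
        exact this.comp (tendsto_inv_nhdsGT_zero.congr (fun x => (one_div x).symm))
      have t2 : Tendsto (fun y : ℝ => Real.arctan (y/(1+s))) (nhdsWithin 0 (Set.Ioi 0)) (nhds 0) := by
        have : ContinuousAt (fun y : ℝ => Real.arctan (y/(1+s))) 0 :=
          (Real.continuous_arctan.comp (continuous_id.div_const _)).continuousAt
        simpa using this.continuousWithinAt.tendsto
      have := ((t1.const_mul (2*(a+b))).add (t2.const_mul (2*b)))
      convert this using 2 <;> ring
    · have t1 : Tendsto (fun y : ℝ => Real.arctan (1/y)) atTop (nhds 0) := by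
        have h0 : Tendsto (fun y : ℝ => 1/y) atTop (nhds 0) := by
          exact tendsto_inv_atTop_zero.congr (fun x => (one_div x).symm)
        simpa [Function.comp_def] using (Real.continuous_arctan.continuousAt (x := 0)).tendsto.comp h0
      have t2 : Tendsto (fun y : ℝ => Real.arctan (y/(1+s))) atTop (nhds (Real.pi/2)) := by
        have hdiv : Tendsto (fun y : ℝ => y/(1+s)) atTop atTop :=
          tendsto_id.atTop_div_const hs1
        exact (Real.tendsto_arctan_atTop.mono_right nhdsWithin_le_nhds).comp hdiv
      have := ((t1.const_mul (2*(a+b))).add (t2.const_mul (2*b)))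
      convert this using 2 <;> ring
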